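/- Let N' ≥ 1, let p_1,...,p_{N'} be reals with 0 ≤ p_1 ≤ ... ≤ p_{N'}, let L ≥ 0, and let k ≥ 1 and l ≥ 1 be reals. Define q_j = max(0, p_j − L) and r_j = k·p_j + l·q_j. Then max over (σ_1,...,σ_{N'}) ∈ {−1,1}^{N'} of [Σ_{j=1}^{N'} σ_j·((k−1)·p_j + (l+1)·q_j) − Σ_{1≤j<j'≤N'} σ_j·σ_{j'}·r_j] equals max( max over σ ∈ {−1,1}^{N'} of [Σ_{j=1}^{N'} σ_j·((k−1)·p_j + (l−1)·q_j) − Σ_{1≤j<j'≤N'} σ_j·σ_{j'}·r_j], max over σ ∈ {−1,1}^{N'} of [Σ_{j=1}^{N'} σ_j·((k+1)·p_j + (l−1)·q_j) − Σ_{1≤j<j'≤N'} σ_j·σ_{j'}·r_j] − 2L ). -/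

import Mathlib

open Finset

/-- Maximum over all sign choices `(σ_1,...,σ_N) ∈ {−1,1}^N` of
`Σ_j σ_j a_j − Σ_{j<j'} σ_j σ_{j'} r_j`. -/
noncomputable def sigMax (N : ℕ) (a r : Fin N → ℝ) : ℝ :=
  Finset.univ.sup' Finset.univ_nonempty fun σ : Fin N → Bool =>
    (∑ j, (if σ j then (1 : ℝ) else -1) * a j) -
      ∑ j, ∑ j', if j < j' then
        (if σ j then (1 : ℝ) else -1) * (if σ j' then (1 : ℝ) else -1) * r j else 0

noncomputable def uprev (f : ℕ → ℝ) (j : ℕ) : ℝ := if j = 0 then 0 else f (j-1)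

lemma sum_uprev_mul (f g : ℕ → ℝ) (N : ℕ) :
    ∑ j ∈ range (N+1), uprev f j * g j = ∑ j ∈ range N, f j * g (j+1) := by
  rw [Finset.sum_range_succ']
  simp [uprev]

lemma sum_sub_uprev (f : ℕ → ℝ) (N : ℕ) :
    ∑ j ∈ range (N+1), (f j - uprev f j) = f N := by
  induction N with
  | zero => simp [uprev]
  | succ n ih => rw [Finset.sum_range_succ, ih]; simp [uprev]

lemma filter_lt_range (a b : ℕ) (f : ℕ → ℝ) :
    ∑ x ∈ (range b).filter (a < ·), f x = ∑ x ∈ Ico (a+1) b, f x := by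
  apply Finset.sum_congr ?_ (fun _ _ => rfl)
  ext x; simp only [mem_filter, mem_range, mem_Ico]; omega

lemma F_eq (N : ℕ) (ε a r : ℕ → ℝ) (hε : ∀ i < N, ε i = 1 ∨ ε i = -1) :
    (∑ j ∈ range N, ε j * a j)
      - ∑ j ∈ range N, ∑ j' ∈ range N, (if j < j' then ε j * ε j' * r j else 0)
    = (∑ j ∈ range N, ((a j - uprev a j) * (∑ i ∈ Ico j N, ε i)
        - (r j - uprev r j) * (∑ i ∈ Ico j N, ε i)^2 / 2))
      + (∑ j ∈ range N, r j) / 2 := by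
  set s : ℕ → ℝ := fun j => ∑ i ∈ Ico j N, ε i with hs
  have hsN : s N = 0 := by simp [hs]
  have hstep : ∀ j, j < N → s j = ε j + s (j+1) := by
    intro j hj
    simpa [hs] using Finset.sum_eq_sum_Ico_succ_bot hj ε
  have hinner : ∀ j ∈ range N,
      (∑ j' ∈ range N, if j < j' then ε j * ε j' * r j else 0)
        = r j * ((s j)^2 - (s (j+1))^2 - 1) / 2 := by
    intro j hj
    rw [mem_range] at hj
    have h1 : (∑ j' ∈ range N, if j < j' then ε j * ε j' * r j else 0)
        = (ε j * r j) * s (j+1) := by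
      rw [Finset.sum_ite, Finset.sum_const_zero, add_zero]
      have : ∑ x ∈ (range N).filter (j < ·), ε j * ε x * r j
          = ∑ x ∈ Ico (j+1) N, ε j * ε x * r j := filter_lt_range j N _
      rw [this, hs]
      rw [Finset.mul_sum]
      exact Finset.sum_congr rfl (fun x _ => by ring)
    rw [h1]
    rcases hε j hj with h | h <;> rw [hstep j hj, h] <;> ring
  rw [Finset.sum_congr rfl hinner]
  have key1 : ∑ j ∈ range N, a j * s (j+1) = ∑ j ∈ range N, uprev a j * s j := by
    have h := sum_uprev_mul a s N
    rw [Finset.sum_range_succ, hsN, mul_zero, add_zero] at h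
    exact h.symm
  have key2 : ∑ j ∈ range N, r j * (s (j+1))^2 = ∑ j ∈ range N, uprev r j * (s j)^2 := by
    have h := sum_uprev_mul r (fun j => (s j)^2) N
    rw [Finset.sum_range_succ, hsN] at h
    simpa using h.symm
  have lhs1 : ∑ j ∈ range N, ε j * a j
      = ∑ j ∈ range N, a j * s j - ∑ j ∈ range N, a j * s (j+1) := by
    rw [← Finset.sum_sub_distrib]
    refine Finset.sum_congr rfl (fun j hj => ?_)
    rw [mem_range] at hj
    rw [hstep j hj]; ring
  have lhs2 : ∑ j ∈ range N, r j * ((s j)^2 - (s (j+1))^2 - 1) / 2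
      = (∑ j ∈ range N, r j * (s j)^2 - ∑ j ∈ range N, r j * (s (j+1))^2
          - ∑ j ∈ range N, r j) / 2 := by
    rw [← Finset.sum_sub_distrib, ← Finset.sum_sub_distrib, ← Finset.sum_div]
    exact congrArg (fun z => z / 2) (Finset.sum_congr rfl (fun j _ => by ring))
  rw [lhs1, lhs2, key1, key2]
  simp only [sub_mul, sub_div, Finset.sum_sub_distrib, Finset.sum_div]
  ring

lemma s_parity (N j : ℕ) (εZ : ℕ → ℤ) (hε : ∀ i < N, εZ i = 1 ∨ εZ i = -1) :
    Even ((∑ i ∈ Ico j N, εZ i) - ((N : ℤ) - j)) ∨ N < j := by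
  rcases Nat.lt_or_ge N j with h | h
  · right; exact h
  left
  have hcard : ((Ico j N).card : ℤ) = (N : ℤ) - j := by
    rw [Nat.card_Ico]; omega
  have : (∑ i ∈ Ico j N, εZ i) - ((N : ℤ) - j) = ∑ i ∈ Ico j N, (εZ i - 1) := by
    rw [Finset.sum_sub_distrib, Finset.sum_const, ← hcard]; push_cast; ring
  rw [this]
  apply Finset.sum_induction _ (fun x => Even x) (fun a b => Even.add) Even.zero
  intro i hi
  rw [mem_Ico] at hi
  rcases hε i hi.2 with h' | h' <;> simp [h']

lemma slot_bound (e d : ℝ) (h0 : 0 ≤ e) (h2 : e ≤ 2*d) (N j : ℕ) (hj : j < N) (sZ : ℤ)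
    (hpar : Even (sZ - ((N:ℤ) - j))) :
    e * (sZ:ℝ) - d * (sZ:ℝ)^2/2 ≤
      if (N - j) % 2 = 1 then e - d/2 else max 0 (2*e - 2*d) := by
  have hd : 0 ≤ d := by linarith
  obtain ⟨c, hc⟩ := hpar
  by_cases hp : (N - j) % 2 = 1
  · rw [if_pos hp]
    have : sZ ≤ -1 ∨ sZ = 1 ∨ 3 ≤ sZ := by omega
    rcases this with h | h | h
    · have hs : (sZ:ℝ) ≤ -1 := by exact_mod_cast h
      nlinarith [mul_nonneg h0 (by linarith : (0:ℝ) ≤ 1 - (sZ:ℝ)),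
        mul_nonneg hd (by nlinarith : (0:ℝ) ≤ (sZ:ℝ)^2 - 1)]
    · rw [h]; push_cast; nlinarith
    · have hs : (3:ℝ) ≤ (sZ:ℝ) := by exact_mod_cast h
      nlinarith [mul_nonneg hd (by nlinarith : (0:ℝ) ≤ ((sZ:ℝ) - 1) * ((sZ:ℝ) - 3))]
  · rw [if_neg hp]
    have : sZ ≤ 0 ∨ sZ = 2 ∨ 4 ≤ sZ := by omega
    rcases this with h | h | h
    · refine le_trans ?_ (le_max_left _ _)
      have hs : (sZ:ℝ) ≤ 0 := by exact_mod_cast h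
      nlinarith [mul_nonneg hd (sq_nonneg (sZ:ℝ)), mul_nonpos_of_nonneg_of_nonpos h0 hs]
    · refine le_trans ?_ (le_max_right _ _)
      rw [h]; push_cast; nlinarith
    · refine le_trans ?_ (le_max_right _ _)
      have hs : (4:ℝ) ≤ (sZ:ℝ) := by exact_mod_cast h
      nlinarith [mul_nonneg hd (by nlinarith : (0:ℝ) ≤ ((sZ:ℝ) - 2) * ((sZ:ℝ) - 4)),
        mul_nonneg h0 (by linarith : (0:ℝ) ≤ (sZ:ℝ) - 2)]

noncomputable def Twit (N : ℕ) (e d : ℕ → ℝ) (j : ℕ) : ℤ :=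
  if N ≤ j then 0 else if (N - j) % 2 = 1 then 1 else if d j < e j then 2 else 0

lemma Twit_diff (N : ℕ) (e d : ℕ → ℝ) (j : ℕ) (hj : j < N) :
    Twit N e d j - Twit N e d (j+1) = 1 ∨ Twit N e d j - Twit N e d (j+1) = -1 := by
  unfold Twit
  split_ifs <;> omega

lemma Twit_val (N : ℕ) (e d : ℕ → ℝ) (j : ℕ) (hj : j < N) :
    e j * ((Twit N e d j : ℤ) : ℝ) - d j * ((Twit N e d j : ℤ) : ℝ)^2/2
      = if (N - j) % 2 = 1 then e j - d j/2 else max 0 (2*e j - 2*d j) := by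
  unfold Twit
  rw [if_neg (by omega : ¬ N ≤ j)]
  by_cases hp : (N - j) % 2 = 1
  · rw [if_pos hp, if_pos hp]; push_cast; ring
  · rw [if_neg hp, if_neg hp]
    by_cases hde : d j < e j
    · rw [if_pos hde, max_eq_right (by linarith)]; push_cast; ring
    · rw [if_neg hde, max_eq_left (by linarith)]; push_cast; ring

lemma ico_telescope (f : ℕ → ℤ) : ∀ n m, m ≤ n → ∑ i ∈ Ico m n, (f i - f (i+1)) = f m - f n := by
  intro n
  induction n with
  | zero => intro m hm; interval_cases m; simp
  | succ n ih =>
    intro m hm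
    rcases Nat.eq_or_lt_of_le hm with h | h
    · rw [h]; simp
    · have hmn : m ≤ n := by omega
      rw [Finset.sum_Ico_succ_top hmn, ih m hmn]; ring

lemma Twit_sum (N : ℕ) (e d : ℕ → ℝ) (j : ℕ) (hj : j ≤ N) :
    ∑ i ∈ Ico j N, (Twit N e d i - Twit N e d (i+1)) = Twit N e d j := by
  rw [ico_telescope _ N j hj]
  have : Twit N e d N = 0 := by unfold Twit; rw [if_pos le_rfl]
  rw [this, sub_zero]

lemma F_range (N : ℕ) (a r : ℕ → ℝ) (σ : Fin N → Bool) (ε : ℕ → ℝ)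
    (hmatch : ∀ (i : ℕ) (h : i < N), (if σ ⟨i, h⟩ then (1:ℝ) else -1) = ε i) :
    ((∑ j : Fin N, (if σ j then (1:ℝ) else -1) * a ↑j) -
      ∑ j : Fin N, ∑ j' : Fin N, if j < j' then
        (if σ j then (1:ℝ) else -1) * (if σ j' then (1:ℝ) else -1) * r ↑j else 0)
    = (∑ j ∈ range N, ε j * a j)
        - ∑ j ∈ range N, ∑ j' ∈ range N, (if j < j' then ε j * ε j' * r j else 0) := by
  have hm : ∀ j : Fin N, (if σ j then (1:ℝ) else -1) = ε ↑j := by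
    intro j
    have := hmatch j.val j.isLt
    simpa using this
  congr 1
  · rw [← Fin.sum_univ_eq_sum_range (fun i => ε i * a i) N]
    exact Finset.sum_congr rfl (fun j _ => by rw [hm j])
  · rw [← Fin.sum_univ_eq_sum_range (fun i => ∑ j' ∈ range N, (if i < j' then ε i * ε j' * r i else 0)) N]
    refine Finset.sum_congr rfl (fun j _ => ?_)
    rw [← Fin.sum_univ_eq_sum_range (fun i' => (if ↑j < i' then ε ↑j * ε i' * r ↑j else 0)) N]
    refine Finset.sum_congr rfl (fun j' _ => ?_)
    rw [hm j, hm j']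
    congr 1

lemma sigMax_eq (N : ℕ) (a r : ℕ → ℝ)
    (h0 : ∀ j < N, 0 ≤ a j - uprev a j)
    (h2 : ∀ j < N, a j - uprev a j ≤ 2*(r j - uprev r j)) :
    sigMax N (fun j => a ↑j) (fun j => r ↑j)
      = (∑ j ∈ range N, (if (N - j) % 2 = 1 then (a j - uprev a j) - (r j - uprev r j)/2
          else max 0 (2*(a j - uprev a j) - 2*(r j - uprev r j))))
        + (∑ j ∈ range N, r j)/2 := by
  apply le_antisymm
  · apply Finset.sup'_le
    intro σ _
    set εZ : ℕ → ℤ := fun i => if h : i < N then (if σ ⟨i, h⟩ then 1 else -1) else 1 with hεZdef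
    set ε : ℕ → ℝ := fun i => ((εZ i : ℤ) : ℝ) with hεdef
    have hεZ : ∀ i < N, εZ i = 1 ∨ εZ i = -1 := by
      intro i hi
      simp only [hεZdef, dif_pos hi]
      by_cases h : σ ⟨i, hi⟩ <;> simp [h]
    have hε : ∀ i < N, ε i = 1 ∨ ε i = -1 := by
      intro i hi
      rcases hεZ i hi with h | h <;> simp [hεdef, h]
    have hmatch : ∀ (i : ℕ) (h : i < N), (if σ ⟨i, h⟩ then (1:ℝ) else -1) = ε i := by
      intro i hi
      simp only [hεdef, hεZdef, dif_pos hi]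
      by_cases h : σ ⟨i, hi⟩ <;> simp [h]
    rw [F_range N a r σ ε hmatch, F_eq N ε a r hε]
    apply add_le_add_left
    apply Finset.sum_le_sum
    intro j hj
    rw [mem_range] at hj
    have hcast : (∑ i ∈ Ico j N, ε i) = (((∑ i ∈ Ico j N, εZ i) : ℤ) : ℝ) := by
      simp [hεdef]
    rw [hcast]
    have hpar := (s_parity N j εZ hεZ).resolve_right (by omega)
    exact slot_bound _ _ (h0 j hj) (h2 j hj) N j hj _ hpar
  · set e : ℕ → ℝ := fun j => a j - uprev a j with he
    set d : ℕ → ℝ := fun j => r j - uprev r j with hd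
    set εZ : ℕ → ℤ := fun i => Twit N e d i - Twit N e d (i+1) with hεZdef
    have hεZ : ∀ i < N, εZ i = 1 ∨ εZ i = -1 := fun i hi => Twit_diff N e d i hi
    set σ : Fin N → Bool := fun j => decide (εZ ↑j = 1) with hσdef
    set ε : ℕ → ℝ := fun i => ((εZ i : ℤ) : ℝ) with hεdef
    have hε : ∀ i < N, ε i = 1 ∨ ε i = -1 := by
      intro i hi
      rcases hεZ i hi with h | h <;> simp [hεdef, h]
    have hmatch : ∀ (i : ℕ) (h : i < N), (if σ ⟨i, h⟩ then (1:ℝ) else -1) = ε i := by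
      intro i hi
      rcases hεZ i hi with h | h <;> simp [hσdef, hεdef, h]
    refine le_trans (le_of_eq ?_) (Finset.le_sup' _ (Finset.mem_univ σ))
    rw [F_range N a r σ ε hmatch, F_eq N ε a r hε]
    apply congrArg₂ (· + ·) ?_ rfl
    apply Finset.sum_congr rfl
    intro j hj
    rw [mem_range] at hj
    have hsum : (∑ i ∈ Ico j N, ε i) = ((Twit N e d j : ℤ) : ℝ) := by
      rw [show (∑ i ∈ Ico j N, ε i) = (((∑ i ∈ Ico j N, εZ i) : ℤ) : ℝ) by simp [hεdef],
        hεZdef]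
      rw [Twit_sum N e d j (le_of_lt hj)]
    rw [hsum, ← Twit_val N e d j hj]


lemma uprev_lin (α β : ℝ) (f g : ℕ → ℝ) (j : ℕ) :
    uprev (fun i => α * f i + β * g i) j = α * uprev f j + β * uprev g j := by
  unfold uprev; split_ifs <;> ring

lemma uprev_sub (f g : ℕ → ℝ) (j : ℕ) :
    uprev (fun i => f i - g i) j = uprev f j - uprev g j := by
  unfold uprev; split_ifs <;> ring


set_option maxHeartbeats 2000000 in
theorem key_identity_utoda (N' : ℕ) (hN' : 1 ≤ N') (p : Fin N' → ℝ)
    (L k l : ℝ) (hp0 : ∀ j, 0 ≤ p j) (hpmono : Monotone p)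
    (hL : 0 ≤ L) (hk : 1 ≤ k) (hl : 1 ≤ l)
    (q r : Fin N' → ℝ)
    (hq : ∀ j, q j = max 0 (p j - L))
    (hr : ∀ j, r j = k * p j + l * q j) :
    sigMax N' (fun j => (k - 1) * p j + (l + 1) * q j) r =
      max (sigMax N' (fun j => (k - 1) * p j + (l - 1) * q j) r)
          (sigMax N' (fun j => (k + 1) * p j + (l - 1) * q j) r - 2 * L) := by
  obtain ⟨M, rfl⟩ : ∃ M, N' = M + 1 := ⟨N' - 1, by omega⟩
  set pe : ℕ → ℝ := fun i => if h : i < M + 1 then p ⟨i, h⟩ else 0 with hpe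
  set qe : ℕ → ℝ := fun i => if h : i < M + 1 then q ⟨i, h⟩ else 0 with hqe
  set re : ℕ → ℝ := fun i => k * pe i + l * qe i with hre
  set Ae : ℕ → ℝ := fun i => (k-1) * pe i + (l+1) * qe i with hAe
  set Be : ℕ → ℝ := fun i => (k-1) * pe i + (l-1) * qe i with hBe
  set Ce : ℕ → ℝ := fun i => (k+1) * pe i + (l-1) * qe i with hCe
  have hmono' : ∀ (i j : ℕ) (hi : i < M+1) (hj : j < M+1), i ≤ j → p ⟨i,hi⟩ ≤ p ⟨j,hj⟩ :=
    fun i j hi hj h => hpmono (by simpa [Fin.mk_le_mk] using h)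
  -- increment facts
  have hDp : ∀ j < M + 1, 0 ≤ pe j - uprev pe j := by
    intro j hj
    unfold uprev
    split_ifs with h
    · simp only [hpe]; rw [dif_pos hj, sub_zero]; exact hp0 _
    · have hj1 : j - 1 < M + 1 := by omega
      simp only [hpe]; rw [dif_pos hj, dif_pos hj1, sub_nonneg]
      exact hmono' _ _ hj1 hj (by omega)
  have hDq0 : ∀ j < M + 1, 0 ≤ qe j - uprev qe j := by
    intro j hj
    unfold uprev
    split_ifs with h
    · simp only [hqe]; rw [dif_pos hj, sub_zero, hq]
      exact le_max_left _ _
    · have hj1 : j - 1 < M + 1 := by omega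
      simp only [hqe]; rw [dif_pos hj, dif_pos hj1, sub_nonneg, hq, hq]
      exact max_le_max le_rfl (by have := hmono' (j-1) j hj1 hj (by omega); linarith)
  have hDqp : ∀ j < M + 1, qe j - uprev qe j ≤ pe j - uprev pe j := by
    intro j hj
    unfold uprev
    split_ifs with h
    · simp only [hqe, hpe]; rw [dif_pos hj, dif_pos hj, sub_zero, sub_zero, hq]
      exact max_le (hp0 _) (by linarith)
    · have hj1 : j - 1 < M + 1 := by omega
      simp only [hqe, hpe]; rw [dif_pos hj, dif_pos hj, dif_pos hj1, dif_pos hj1, hq, hq]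
      have hmm := hmono' (j-1) j hj1 hj (by omega)
      have h1 : max 0 (p ⟨j, hj⟩ - L) ≤ max 0 (p ⟨j-1, hj1⟩ - L) + (p ⟨j, hj⟩ - p ⟨j-1, hj1⟩) := by
        apply max_le
        · have h2 : (0:ℝ) ≤ max 0 (p ⟨j-1, hj1⟩ - L) := le_max_left _ _
          linarith
        · have h2 : p ⟨j-1, hj1⟩ - L ≤ max 0 (p ⟨j-1, hj1⟩ - L) := le_max_right _ _
          linarith
      linarith
  -- derivative of re
  have hDr : ∀ j : ℕ, re j - uprev re j = k * (pe j - uprev pe j) + l * (qe j - uprev qe j) := by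
    intro j
    simp only [hre]
    rw [uprev_lin k l pe qe j]
    ring
  have hDA : ∀ j : ℕ, Ae j - uprev Ae j = (k-1) * (pe j - uprev pe j) + (l+1) * (qe j - uprev qe j) := by
    intro j; simp only [hAe]; rw [uprev_lin (k-1) (l+1) pe qe j]; ring
  have hDB : ∀ j : ℕ, Be j - uprev Be j = (k-1) * (pe j - uprev pe j) + (l-1) * (qe j - uprev qe j) := by
    intro j; simp only [hBe]; rw [uprev_lin (k-1) (l-1) pe qe j]; ring
  have hDC : ∀ j : ℕ, Ce j - uprev Ce j = (k+1) * (pe j - uprev pe j) + (l-1) * (qe j - uprev qe j) := by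
    intro j; simp only [hCe]; rw [uprev_lin (k+1) (l-1) pe qe j]; ring
  -- the three sigMax evaluations
  have hfr : r = fun j : Fin (M+1) => re ↑j := by
    funext j
    simp only [hre, hpe, hqe, dif_pos j.isLt]
    rw [hr]
  have hfA : (fun j : Fin (M+1) => (k - 1) * p j + (l + 1) * q j) = fun j : Fin (M+1) => Ae ↑j := by
    funext j; simp only [hAe, hpe, hqe, dif_pos j.isLt]
  have hfB : (fun j : Fin (M+1) => (k - 1) * p j + (l - 1) * q j) = fun j : Fin (M+1) => Be ↑j := by
    funext j; simp only [hBe, hpe, hqe, dif_pos j.isLt]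
  have hfC : (fun j : Fin (M+1) => (k + 1) * p j + (l - 1) * q j) = fun j : Fin (M+1) => Ce ↑j := by
    funext j; simp only [hCe, hpe, hqe, dif_pos j.isLt]
  have hevalA := sigMax_eq (M+1) Ae re
    (fun j hj => by rw [hDA j]; nlinarith [hDp j hj, hDq0 j hj, hDqp j hj])
    (fun j hj => by rw [hDA j, hDr j]; nlinarith [hDp j hj, hDq0 j hj, hDqp j hj])
  have hevalB := sigMax_eq (M+1) Be re
    (fun j hj => by rw [hDB j]; nlinarith [hDp j hj, hDq0 j hj, hDqp j hj])
    (fun j hj => by rw [hDB j, hDr j]; nlinarith [hDp j hj, hDq0 j hj, hDqp j hj])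
  have hevalC := sigMax_eq (M+1) Ce re
    (fun j hj => by rw [hDC j]; nlinarith [hDp j hj, hDq0 j hj, hDqp j hj])
    (fun j hj => by rw [hDC j, hDr j]; nlinarith [hDp j hj, hDq0 j hj, hDqp j hj])
  rw [hfr, hfA, hfB, hfC, hevalA, hevalB, hevalC]
  -- abbreviations for the three sums
  set SA := ∑ j ∈ range (M+1), (if (M+1 - j) % 2 = 1 then (Ae j - uprev Ae j) - (re j - uprev re j)/2
      else max 0 (2*(Ae j - uprev Ae j) - 2*(re j - uprev re j))) with hSA
  set SB := ∑ j ∈ range (M+1), (if (M+1 - j) % 2 = 1 then (Be j - uprev Be j) - (re j - uprev re j)/2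
      else max 0 (2*(Be j - uprev Be j) - 2*(re j - uprev re j))) with hSB
  set SC := ∑ j ∈ range (M+1), (if (M+1 - j) % 2 = 1 then (Ce j - uprev Ce j) - (re j - uprev re j)/2
      else max 0 (2*(Ce j - uprev Ce j) - 2*(re j - uprev re j))) with hSC
  set R := (∑ j ∈ range (M+1), re j)/2 with hR
  -- SB ≤ SA
  have hBA : SB ≤ SA := by
    rw [hSA, hSB]
    apply Finset.sum_le_sum
    intro j hj
    rw [mem_range] at hj
    have h1 := hDq0 j hj
    split_ifs with hp
    · rw [hDA j, hDB j]; nlinarith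
    · apply max_le_max le_rfl
      rw [hDA j, hDB j]; nlinarith
  -- SC = SA + 2 * (pe M - qe M)
  have hCA : SC = SA + 2 * (pe M - qe M) := by
    have hterm : ∀ j ∈ range (M+1),
        (if (M+1 - j) % 2 = 1 then (Ce j - uprev Ce j) - (re j - uprev re j)/2
          else max 0 (2*(Ce j - uprev Ce j) - 2*(re j - uprev re j)))
        = (if (M+1 - j) % 2 = 1 then (Ae j - uprev Ae j) - (re j - uprev re j)/2
          else max 0 (2*(Ae j - uprev Ae j) - 2*(re j - uprev re j)))
          + 2 * ((pe j - uprev pe j) - (qe j - uprev qe j)) := by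
      intro j hj
      rw [mem_range] at hj
      have h1 := hDp j hj
      have h2 := hDq0 j hj
      have h3 := hDqp j hj
      split_ifs with hp
      · rw [hDA j, hDC j]; ring
      · rw [hDA j, hDC j, hDr j]
        rw [max_eq_right (by nlinarith), max_eq_left (by nlinarith)]
        ring
    rw [hSC, hSA, Finset.sum_congr rfl hterm, Finset.sum_add_distrib]
    congr 1
    have : ∀ j, (pe j - uprev pe j) - (qe j - uprev qe j)
        = (fun i => pe i - qe i) j - uprev (fun i => pe i - qe i) j := by
      intro j; rw [uprev_sub pe qe j]; ring
    calc ∑ j ∈ range (M+1), 2 * ((pe j - uprev pe j) - (qe j - uprev qe j))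
        = 2 * ∑ j ∈ range (M+1), ((fun i => pe i - qe i) j - uprev (fun i => pe i - qe i) j) := by
          rw [Finset.mul_sum]
          exact Finset.sum_congr rfl (fun j _ => by rw [this j])
      _ = 2 * (pe M - qe M) := by rw [sum_sub_uprev (fun i => pe i - qe i) M]
  have hlast : pe M = p ⟨M, by omega⟩ := by simp only [hpe]; rw [dif_pos (by omega : M < M + 1)]
  have hlastq : qe M = max 0 (p ⟨M, by omega⟩ - L) := by
    simp only [hqe]; rw [dif_pos (by omega : M < M + 1), hq]
  rcases le_or_gt L (p ⟨M, by omega⟩) with hcase | hcase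
  · -- C branch is tight
    have hqM : qe M = p ⟨M, by omega⟩ - L := by rw [hlastq, max_eq_right (by linarith)]
    have hSCval : SC = SA + 2 * L := by rw [hCA, hlast, hqM]; ring
    rw [max_eq_right (by linarith)]
    linarith
  · -- q ≡ 0, B branch is tight
    have hq0 : ∀ i, qe i = 0 := by
      intro i
      by_cases hi : i < M + 1
      · simp only [hqe]; rw [dif_pos hi, hq]
        rw [max_eq_left (by have := hmono' i M hi (by omega) (by omega); linarith)]
      · simp only [hqe]; rw [dif_neg hi]
    have hAB : Ae = Be := by funext i; simp only [hAe, hBe, hq0 i]; ring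
    have hSAB : SA = SB := by rw [hSA, hSB, hAB]
    have hqM : qe M = 0 := hq0 M
    have hSCval : SC = SA + 2 * (p ⟨M, by omega⟩) := by rw [hCA, hlast, hqM]; ring
    rw [max_eq_left (by linarith)]
    linarith
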